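/- On ℂ^2 ⊗ ℂ^4 (control qubit first), define C_in = |0⟩⟨0| ⊗ (Z⊗I₂) + |1⟩⟨1| ⊗ I₄, and let U_{X²}(π/2) = exp(−i(π/8)(ΣᵢXᵢ)²) and U_{Y²}(π/2) = exp(−i(π/8)(ΣᵢYᵢ)²) be the three-qubit Mølmer–Sørensen gates (the sums running over all three qubits). Define V₁ = C_in · U_{X²}(π/2) and V₂ = C_in · U_{Y²}(π/2), and for any 4×4 matrix ρ let F_j(ρ) = tr_c[ V_j (|1⟩⟨1| ⊗ ρ) V_j† ] denote the result of applying V_j with the ancilla reset to |1⟩ and then tracing out the ancilla (the sum of the two diagonal 4×4 blocks). Then for every density matrix ρ on ℂ^4, F₂(F₁(ρ)) = |Ψ⁻⟩⟨Ψ⁻|, where |Ψ⁻⟩ = (|01⟩ − |10⟩)/√2: the simplified pumping circuit with a single MS gate per control cycle deterministically prepares the singlet Bell state. -/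

import Mathlib

open Matrix
open Kronecker
open scoped ComplexOrder

/-- Pauli matrices. -/
def PX : Matrix (Fin 2) (Fin 2) ℂ := !![0, 1; 1, 0]
def PY : Matrix (Fin 2) (Fin 2) ℂ := !![0, -Complex.I; Complex.I, 0]
def PZ : Matrix (Fin 2) (Fin 2) ℂ := !![1, 0; 0, -1]

/-- Collective spin operators `S_x` and `S_y` on three qubits (control first). -/
def Sx3 : Matrix (Fin 2 × (Fin 2 × Fin 2)) (Fin 2 × (Fin 2 × Fin 2)) ℂ :=
  PX ⊗ₖ ((1 : Matrix (Fin 2) (Fin 2) ℂ) ⊗ₖ (1 : Matrix (Fin 2) (Fin 2) ℂ))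
    + (1 : Matrix (Fin 2) (Fin 2) ℂ) ⊗ₖ (PX ⊗ₖ (1 : Matrix (Fin 2) (Fin 2) ℂ))
    + (1 : Matrix (Fin 2) (Fin 2) ℂ) ⊗ₖ ((1 : Matrix (Fin 2) (Fin 2) ℂ) ⊗ₖ PX)
def Sy3 : Matrix (Fin 2 × (Fin 2 × Fin 2)) (Fin 2 × (Fin 2 × Fin 2)) ℂ :=
  PY ⊗ₖ ((1 : Matrix (Fin 2) (Fin 2) ℂ) ⊗ₖ (1 : Matrix (Fin 2) (Fin 2) ℂ))
    + (1 : Matrix (Fin 2) (Fin 2) ℂ) ⊗ₖ (PY ⊗ₖ (1 : Matrix (Fin 2) (Fin 2) ℂ))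
    + (1 : Matrix (Fin 2) (Fin 2) ℂ) ⊗ₖ ((1 : Matrix (Fin 2) (Fin 2) ℂ) ⊗ₖ PY)

/-- The three-qubit Mølmer–Sørensen gates `U_{X²}(π/2)` and `U_{Y²}(π/2)`. -/
noncomputable def UX2 : Matrix (Fin 2 × (Fin 2 × Fin 2)) (Fin 2 × (Fin 2 × Fin 2)) ℂ :=
  NormedSpace.exp ((-(Complex.I) * (Real.pi / 8)) • (Sx3 * Sx3))
noncomputable def UY2 : Matrix (Fin 2 × (Fin 2 × Fin 2)) (Fin 2 × (Fin 2 × Fin 2)) ℂ :=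
  NormedSpace.exp ((-(Complex.I) * (Real.pi / 8)) • (Sy3 * Sy3))

/-- The controlled gate `C_in = |0⟩⟨0| ⊗ Z₁ + |1⟩⟨1| ⊗ I₄`. -/
def Cin : Matrix (Fin 2 × (Fin 2 × Fin 2)) (Fin 2 × (Fin 2 × Fin 2)) ℂ :=
  single (0 : Fin 2) 0 (1 : ℂ) ⊗ₖ (PZ ⊗ₖ (1 : Matrix (Fin 2) (Fin 2) ℂ))
    + single (1 : Fin 2) 1 (1 : ℂ) ⊗ₖ (1 : Matrix (Fin 2 × Fin 2) (Fin 2 × Fin 2) ℂ)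

/-- The two cycles of the simplified pumping circuit (a single MS gate per cycle). -/
noncomputable def V1 : Matrix (Fin 2 × (Fin 2 × Fin 2)) (Fin 2 × (Fin 2 × Fin 2)) ℂ :=
  Cin * UX2
noncomputable def V2 : Matrix (Fin 2 × (Fin 2 × Fin 2)) (Fin 2 × (Fin 2 × Fin 2)) ℂ :=
  Cin * UY2

/-- Partial trace over the (first) ancilla factor: sum of the two diagonal blocks. -/
noncomputable def trAncilla
    (M : Matrix (Fin 2 × (Fin 2 × Fin 2)) (Fin 2 × (Fin 2 × Fin 2)) ℂ) :
    Matrix (Fin 2 × Fin 2) (Fin 2 × Fin 2) ℂ :=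
  Matrix.of fun i j => ∑ a : Fin 2, M (a, i) (a, j)

/-- One simplified control cycle: reset the ancilla to `|1⟩`, apply `V_j`, trace out
the ancilla. -/
noncomputable def F (V : Matrix (Fin 2 × (Fin 2 × Fin 2)) (Fin 2 × (Fin 2 × Fin 2)) ℂ)
    (ρ : Matrix (Fin 2 × Fin 2) (Fin 2 × Fin 2) ℂ) :
    Matrix (Fin 2 × Fin 2) (Fin 2 × Fin 2) ℂ :=
  trAncilla (V * (single (1 : Fin 2) 1 (1 : ℂ) ⊗ₖ ρ) * Vᴴ)

/-- The singlet Bell state `|Ψ⁻⟩ = (|01⟩ − |10⟩)/√2`. -/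
noncomputable def PsiM : Fin 2 × Fin 2 → ℂ := fun p =>
  ((if p = (0, 1) then 1 else 0) - (if p = (1, 0) then 1 else 0)) / (Real.sqrt 2 : ℂ)

-- ====== auxiliary development ======
section Aux

/-- exponential of a scalar multiple of an idempotent in a complete normed ℂ-algebra -/
lemma exp_idem_gen {A : Type*} [NormedRing A] [NormedAlgebra ℂ A] [CompleteSpace A]
    (P : A) (h : P * P = P) (t : ℂ) :
    NormedSpace.exp (t • P) = 1 + (Complex.exp t - 1) • P := by
  have hpow : ∀ n : ℕ, P ^ (n + 1) = P := by
    intro n; induction n with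
    | zero => simp
    | succ k ih => rw [pow_succ, ih, h]
  have hsum : Summable fun n : ℕ => ((Nat.factorial n : ℂ))⁻¹ • (t • P) ^ n :=
    NormedSpace.expSeries_summable' _
  have hsc : Summable fun n : ℕ => ((Nat.factorial n : ℂ))⁻¹ • t ^ n :=
    NormedSpace.expSeries_summable' _
  have hsc' : Summable fun n : ℕ => ((Nat.factorial (n+1) : ℂ))⁻¹ * t ^ (n + 1) := by
    simpa [smul_eq_mul] using (summable_nat_add_iff 1).mpr hsc
  have key : ∀ n : ℕ, ((Nat.factorial n : ℂ))⁻¹ • (t • P) ^ n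
      = if n = 0 then 1 else (((Nat.factorial n : ℂ))⁻¹ * t ^ n) • P := by
    intro n
    cases n with
    | zero => simp
    | succ k => simp [smul_pow, hpow, smul_smul]
  rw [NormedSpace.exp_eq_tsum ℂ]
  simp only []
  rw [Summable.tsum_eq_zero_add hsum]
  have h2 : (fun n : ℕ => ((Nat.factorial (n+1) : ℂ))⁻¹ • (t • P) ^ (n + 1))
      = fun n : ℕ => (((Nat.factorial (n+1) : ℂ))⁻¹ * t ^ (n + 1)) • P := by
    funext n; rw [key (n + 1)]; simp
  rw [h2, Summable.tsum_smul_const hsc']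
  have h3 : ∑' n : ℕ, (((Nat.factorial (n+1) : ℂ))⁻¹ * t ^ (n + 1)) = Complex.exp t - 1 := by
    have := congrFun Complex.exp_eq_exp_ℂ t
    rw [NormedSpace.exp_eq_tsum ℂ] at this
    simp only [] at this
    rw [this, Summable.tsum_eq_zero_add hsc]
    simp [smul_eq_mul]
  rw [h3]
  simp

lemma hPX2 : PX * PX = 1 := by
  ext i j
  fin_cases i <;> fin_cases j <;>
    simp [PX, Matrix.mul_apply, Fin.sum_univ_two, Matrix.one_apply]

lemma hPY2 : PY * PY = 1 := by
  ext i j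
  fin_cases i <;> fin_cases j <;>
    simp [PY, Matrix.mul_apply, Fin.sum_univ_two, Matrix.one_apply, Complex.I_mul_I] <;>
    ring_nf <;> simp [Complex.I_sq]

/-- the `s = ±3` projector built from a square-one 2×2 matrix -/
noncomputable def projK (P : Matrix (Fin 2) (Fin 2) ℂ) :
    Matrix (Fin 2 × (Fin 2 × Fin 2)) (Fin 2 × (Fin 2 × Fin 2)) ℂ :=
  (4 : ℂ)⁻¹ • ((1 : Matrix (Fin 2 × (Fin 2 × Fin 2)) (Fin 2 × (Fin 2 × Fin 2)) ℂ)
    + (P ⊗ₖ (P ⊗ₖ (1 : Matrix (Fin 2) (Fin 2) ℂ))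
      + P ⊗ₖ ((1 : Matrix (Fin 2) (Fin 2) ℂ) ⊗ₖ P)
      + (1 : Matrix (Fin 2) (Fin 2) ℂ) ⊗ₖ (P ⊗ₖ P)))

lemma sq3 (P : Matrix (Fin 2) (Fin 2) ℂ) (hP : P * P = 1) :
    (P ⊗ₖ ((1 : Matrix (Fin 2) (Fin 2) ℂ) ⊗ₖ (1 : Matrix (Fin 2) (Fin 2) ℂ))
      + (1 : Matrix (Fin 2) (Fin 2) ℂ) ⊗ₖ (P ⊗ₖ (1 : Matrix (Fin 2) (Fin 2) ℂ))
      + (1 : Matrix (Fin 2) (Fin 2) ℂ) ⊗ₖ ((1 : Matrix (Fin 2) (Fin 2) ℂ) ⊗ₖ P))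
    * (P ⊗ₖ ((1 : Matrix (Fin 2) (Fin 2) ℂ) ⊗ₖ (1 : Matrix (Fin 2) (Fin 2) ℂ))
      + (1 : Matrix (Fin 2) (Fin 2) ℂ) ⊗ₖ (P ⊗ₖ (1 : Matrix (Fin 2) (Fin 2) ℂ))
      + (1 : Matrix (Fin 2) (Fin 2) ℂ) ⊗ₖ ((1 : Matrix (Fin 2) (Fin 2) ℂ) ⊗ₖ P))
    = 1 + (8 : ℂ) • projK P := by
  unfold projK
  simp only [add_mul, mul_add, ← Matrix.mul_kronecker_mul, one_mul, mul_one, hP,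
    Matrix.one_kronecker_one]
  module

lemma idem3 (P : Matrix (Fin 2) (Fin 2) ℂ) (hP : P * P = 1) :
    projK P * projK P = projK P := by
  unfold projK
  simp only [Matrix.smul_mul, Matrix.mul_smul, add_mul, mul_add, ← Matrix.mul_kronecker_mul,
    one_mul, mul_one, hP, Matrix.one_kronecker_one]
  module

end Aux
section Aux2

noncomputable def S3 (P : Matrix (Fin 2) (Fin 2) ℂ) :
    Matrix (Fin 2 × (Fin 2 × Fin 2)) (Fin 2 × (Fin 2 × Fin 2)) ℂ :=
  P ⊗ₖ ((1 : Matrix (Fin 2) (Fin 2) ℂ) ⊗ₖ (1 : Matrix (Fin 2) (Fin 2) ℂ))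
    + (1 : Matrix (Fin 2) (Fin 2) ℂ) ⊗ₖ (P ⊗ₖ (1 : Matrix (Fin 2) (Fin 2) ℂ))
    + (1 : Matrix (Fin 2) (Fin 2) ℂ) ⊗ₖ ((1 : Matrix (Fin 2) (Fin 2) ℂ) ⊗ₖ P)

noncomputable def K3 (P : Matrix (Fin 2) (Fin 2) ℂ) :
    Matrix (Fin 2 × (Fin 2 × Fin 2)) (Fin 2 × (Fin 2 × Fin 2)) ℂ :=
  P ⊗ₖ (P ⊗ₖ (1 : Matrix (Fin 2) (Fin 2) ℂ))
    + P ⊗ₖ ((1 : Matrix (Fin 2) (Fin 2) ℂ) ⊗ₖ P)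
    + (1 : Matrix (Fin 2) (Fin 2) ℂ) ⊗ₖ (P ⊗ₖ P)

lemma exp_matrix_idem (P : Matrix (Fin 2 × (Fin 2 × Fin 2)) (Fin 2 × (Fin 2 × Fin 2)) ℂ)
    (h : P * P = P) (t : ℂ) :
    NormedSpace.exp (t • P) = 1 + (Complex.exp t - 1) • P := by
  letI : SeminormedRing (Matrix (Fin 2 × (Fin 2 × Fin 2)) (Fin 2 × (Fin 2 × Fin 2)) ℂ) :=
    Matrix.linftyOpSemiNormedRing
  letI : NormedRing (Matrix (Fin 2 × (Fin 2 × Fin 2)) (Fin 2 × (Fin 2 × Fin 2)) ℂ) :=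
    Matrix.linftyOpNormedRing
  letI : NormedAlgebra ℂ (Matrix (Fin 2 × (Fin 2 × Fin 2)) (Fin 2 × (Fin 2 × Fin 2)) ℂ) :=
    Matrix.linftyOpNormedAlgebra
  exact exp_idem_gen P h t

lemma exp_MS (P : Matrix (Fin 2) (Fin 2) ℂ) (hP : P * P = 1) (t : ℂ)
    (hexp : Complex.exp (8 * t) = -1) :
    NormedSpace.exp (t • (S3 P * S3 P))
      = Complex.exp t • ((2 : ℂ)⁻¹ • (1 - K3 P)) := by
  have hsq : S3 P * S3 P = 1 + (8 : ℂ) • projK P := sq3 P hP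
  have hsplit : t • (S3 P * S3 P) = t • (1 : Matrix (Fin 2 × (Fin 2 × Fin 2))
      (Fin 2 × (Fin 2 × Fin 2)) ℂ) + (8 * t) • projK P := by
    rw [hsq]; rw [smul_add, smul_smul, mul_comm]
  rw [hsplit, Matrix.exp_add_of_commute]
  · rw [exp_matrix_idem 1 (one_mul 1) t, exp_matrix_idem (projK P) (idem3 P hP) (8 * t), hexp]
    have e1 : (1 : Matrix (Fin 2 × (Fin 2 × Fin 2)) (Fin 2 × (Fin 2 × Fin 2)) ℂ)
        + (Complex.exp t - 1) • 1 = Complex.exp t • 1 := by module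
    have e2 : (1 : Matrix (Fin 2 × (Fin 2 × Fin 2)) (Fin 2 × (Fin 2 × Fin 2)) ℂ)
        + (-1 - 1 : ℂ) • projK P = (2 : ℂ)⁻¹ • (1 - K3 P) := by
      unfold projK K3; module
    rw [e1, e2, smul_mul_assoc, one_mul]
  · exact ((Commute.one_left (projK P)).smul_left t).smul_right (8 * t)

lemma hexpX : Complex.exp (8 * (-(Complex.I) * (Real.pi / 8))) = -1 := by
  have h : 8 * (-(Complex.I) * ((Real.pi : ℂ) / 8)) = -((Real.pi : ℂ) * Complex.I) := by ring
  rw [h, Complex.exp_neg, Complex.exp_pi_mul_I]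
  norm_num

lemma hUX2 : UX2 = Complex.exp (-(Complex.I) * (Real.pi / 8)) • ((2 : ℂ)⁻¹ • (1 - K3 PX)) := by
  rw [UX2, show Sx3 = S3 PX from rfl]
  exact exp_MS PX hPX2 _ hexpX

lemma hUY2 : UY2 = Complex.exp (-(Complex.I) * (Real.pi / 8)) • ((2 : ℂ)⁻¹ • (1 - K3 PY)) := by
  rw [UY2, show Sy3 = S3 PY from rfl]
  exact exp_MS PY hPY2 _ hexpX

end Aux2
section Aux3

noncomputable def w1v : Fin 2 → Fin 2 → Fin 2 → Fin 2 → Fin 2 → Fin 2 → ℂ :=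
  ![![![![![![(1/2), 0], ![0, (-(1/2))]], ![![0, (-(1/2))], ![(-(1/2)), 0]]], ![![![0, (1/2)], ![(-(1/2)), 0]], ![![(-(1/2)), 0], ![0, (-(1/2))]]]], ![![![![0, (1/2)], ![(-(1/2)), 0]], ![![(1/2), 0], ![0, (1/2)]]], ![![![(1/2), 0], ![0, (-(1/2))]], ![![0, (1/2)], ![(1/2), 0]]]]], ![![![![![0, (-(1/2))], ![(-(1/2)), 0]], ![![(1/2), 0], ![0, (-(1/2))]]], ![![![(-(1/2)), 0], ![0, (-(1/2))]], ![![0, (1/2)], ![(-(1/2)), 0]]]], ![![![![(-(1/2)), 0], ![0, (-(1/2))]], ![![0, (-(1/2))], ![(1/2), 0]]], ![![![0, (-(1/2))], ![(-(1/2)), 0]], ![![(-(1/2)), 0], ![0, (1/2)]]]]]]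
noncomputable def w2v : Fin 2 → Fin 2 → Fin 2 → Fin 2 → Fin 2 → Fin 2 → ℂ :=
  ![![![![![![(1/2), 0], ![0, (1/2)]], ![![0, (1/2)], ![(1/2), 0]]], ![![![0, (1/2)], ![(-(1/2)), 0]], ![![(-(1/2)), 0], ![0, (1/2)]]]], ![![![![0, (1/2)], ![(-(1/2)), 0]], ![![(1/2), 0], ![0, (-(1/2))]]], ![![![(-(1/2)), 0], ![0, (-(1/2))]], ![![0, (1/2)], ![(1/2), 0]]]]], ![![![![![0, (-(1/2))], ![(-(1/2)), 0]], ![![(1/2), 0], ![0, (1/2)]]], ![![![(1/2), 0], ![0, (-(1/2))]], ![![0, (1/2)], ![(-(1/2)), 0]]]], ![![![![(1/2), 0], ![0, (-(1/2))]], ![![0, (-(1/2))], ![(1/2), 0]]], ![![![0, (1/2)], ![(1/2), 0]], ![![(1/2), 0], ![0, (1/2)]]]]]]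

noncomputable def W1e : Matrix (Fin 2 × (Fin 2 × Fin 2)) (Fin 2 × (Fin 2 × Fin 2)) ℂ :=
  Matrix.of fun i j => w1v i.1 i.2.1 i.2.2 j.1 j.2.1 j.2.2
noncomputable def W2e : Matrix (Fin 2 × (Fin 2 × Fin 2)) (Fin 2 × (Fin 2 × Fin 2)) ℂ :=
  Matrix.of fun i j => w2v i.1 i.2.1 i.2.2 j.1 j.2.1 j.2.2

def dvec (i : Fin 2 × (Fin 2 × Fin 2)) : ℂ := if i.1 = 0 ∧ i.2.1 = 1 then -1 else 1

lemma hCin : Cin = Matrix.diagonal dvec := by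
  rw [← Matrix.ext_iff]
  simp only [Prod.forall, Fin.forall_fin_two]
  norm_num [Cin, dvec, PZ, Matrix.single, Matrix.one_apply, Matrix.diagonal,
    Prod.ext_iff]

lemma hW1 : Cin * ((2 : ℂ)⁻¹ • (1 - K3 PX)) = W1e := by
  rw [hCin]
  rw [← Matrix.ext_iff]
  simp only [Matrix.diagonal_mul, Prod.forall, Fin.forall_fin_two]
  norm_num [dvec, K3, PX, W1e, w1v, Matrix.one_apply, Prod.ext_iff]

lemma hW2 : Cin * ((2 : ℂ)⁻¹ • (1 - K3 PY)) = W2e := by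
  rw [hCin]
  rw [← Matrix.ext_iff]
  simp only [Matrix.diagonal_mul, Prod.forall, Fin.forall_fin_two]
  norm_num [dvec, K3, PY, W2e, w2v, Matrix.one_apply, Prod.ext_iff]

end Aux3
section Aux4

lemma F_phase (z : ℂ) (W : Matrix (Fin 2 × (Fin 2 × Fin 2)) (Fin 2 × (Fin 2 × Fin 2)) ℂ)
    (ρ : Matrix (Fin 2 × Fin 2) (Fin 2 × Fin 2) ℂ) :
    F (z • W) ρ = (z * star z) • F W ρ := by
  unfold F trAncilla
  have h : (z • W) * (single (1 : Fin 2) 1 (1 : ℂ) ⊗ₖ ρ) * (z • W)ᴴ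
      = (z * star z) • (W * (single (1 : Fin 2) 1 (1 : ℂ) ⊗ₖ ρ) * Wᴴ) := by
    rw [Matrix.conjTranspose_smul, Matrix.smul_mul, Matrix.smul_mul, Matrix.mul_smul,
      smul_smul]
  rw [h]
  ext i j
  simp only [Matrix.smul_apply, smul_eq_mul, Fin.sum_univ_two, Matrix.of_apply]
  ring

lemma hzz : Complex.exp (-(Complex.I) * (Real.pi / 8))
    * star (Complex.exp (-(Complex.I) * (Real.pi / 8))) = 1 := by
  have h : (-(Complex.I) * (Real.pi / 8) : ℂ)
      + (starRingEnd ℂ) (-(Complex.I) * (Real.pi / 8)) = 0 := by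
    simp [_root_.map_mul, map_neg, Complex.conj_I, map_div₀, Complex.conj_ofReal, map_ofNat]
  rw [Complex.star_def, ← Complex.exp_conj, ← Complex.exp_add, h, Complex.exp_zero]

lemma hFV1 (ρ : Matrix (Fin 2 × Fin 2) (Fin 2 × Fin 2) ℂ) : F V1 ρ = F W1e ρ := by
  have h : V1 = Complex.exp (-(Complex.I) * (Real.pi / 8)) • W1e := by
    rw [V1, hUX2, Matrix.mul_smul, hW1]
  rw [h, F_phase, hzz, one_smul]

lemma hFV2 (ρ : Matrix (Fin 2 × Fin 2) (Fin 2 × Fin 2) ℂ) : F V2 ρ = F W2e ρ := by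
  have h : V2 = Complex.exp (-(Complex.I) * (Real.pi / 8)) • W2e := by
    rw [V2, hUY2, Matrix.mul_smul, hW2]
  rw [h, F_phase, hzz, one_smul]

end Aux4
section Aux5

noncomputable def sigv (ρ : Matrix (Fin 2 × Fin 2) (Fin 2 × Fin 2) ℂ) :
    Fin 2 → Fin 2 → Fin 2 → Fin 2 → ℂ :=
  ![![![![(ρ (0,0) (0,0) - ρ (0,0) (1,1) + ρ (0,1) (0,1) + ρ (0,1) (1,0) + ρ (1,0) (0,1) + ρ (1,0) (1,0) - ρ (1,1) (0,0) + ρ (1,1) (1,1)) / 4, (ρ (0,0) (0,1) - ρ (0,0) (1,0) + ρ (0,1) (0,0) + ρ (0,1) (1,1) + ρ (1,0) (0,0) + ρ (1,0) (1,1) - ρ (1,1) (0,1) + ρ (1,1) (1,0)) / 4], ![(-ρ (0,0) (0,1) + ρ (0,0) (1,0) - ρ (0,1) (0,0) - ρ (0,1) (1,1) - ρ (1,0) (0,0) - ρ (1,0) (1,1) + ρ (1,1) (0,1) - ρ (1,1) (1,0)) / 4, (-ρ (0,0) (0,0) + ρ (0,0) (1,1) - ρ (0,1) (0,1) - ρ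 (0,1) (1,0) - ρ (1,0) (0,1) - ρ (1,0) (1,0) + ρ (1,1) (0,0) - ρ (1,1) (1,1)) / 4]], ![![(ρ (0,0) (0,1) + ρ (0,0) (1,0) + ρ (0,1) (0,0) - ρ (0,1) (1,1) - ρ (1,0) (0,0) + ρ (1,0) (1,1) + ρ (1,1) (0,1) + ρ (1,1) (1,0)) / 4, (ρ (0,0) (0,0) + ρ (0,0) (1,1) + ρ (0,1) (0,1) - ρ (0,1) (1,0) - ρ (1,0) (0,1) + ρ (1,0) (1,0) + ρ (1,1) (0,0) + ρ (1,1) (1,1)) / 4], ![(-ρ (0,0) (0,0) - ρ (0,0) (1,1) - ρ (0,1) (0,1) + ρ (0,1) (1,0) + ρ (1,0) (0,1) - ρ (1,0) (1,0) - ρ (1,1) (0,0) - ρ (1,1) (1,1)) / 4, (-ρ (0,0) (0,1) - ρ (0,0) (1,0) - ρ (0,1) (0,0) + ρ (0,1) (1,1) + ρ (1,0) (0,0) - ρ (1,0) (1,1) - ρ (1,1) (0,1) - ρ (1,1) (1,0)) / 4]]],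
   ![![![(-ρ (0,0) (0,1) - ρ (0,0) (1,0) - ρ (0,1) (0,0) + ρ (0,1) (1,1) + ρ (1,0) (0,0) - ρ (1,0) (1,1) - ρ (1,1) (0,1) - ρ (1,1) (1,0)) / 4, (-ρ (0,0) (0,0) - ρ (0,0) (1,1) - ρ (0,1) (0,1) + ρ (0,1) (1,0) + ρ (1,0) (0,1) - ρ (1,0) (1,0) - ρ (1,1) (0,0) - ρ (1,1) (1,1)) / 4], ![(ρ (0,0) (0,0) + ρ (0,0) (1,1) + ρ (0,1) (0,1) - ρ (0,1) (1,0) - ρ (1,0) (0,1) + ρ (1,0) (1,0) + ρ (1,1) (0,0) + ρ (1,1) (1,1)) / 4, (ρ (0,0) (0,1) + ρ (0,0) (1,0) + ρ (0,1) (0,0) - ρ (0,1) (1,1) - ρ (1,0) (0,0) + ρ (1,0) (1,1) + ρ (1,1) (0,1) + ρ (1,1) (1,0)) / 4]], ![![(-ρ (0,0) (0,0) + ρ (0,0) (1,1) - ρ (0,1) (0,1) - ρ (0,1) (1,0) - ρ (1,0) (0,1) - ρ (1,0) (1,0) + ρ (1,1) (0,0) - ρ (1,1) (1,1)) / 4,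 (-ρ (0,0) (0,1) + ρ (0,0) (1,0) - ρ (0,1) (0,0) - ρ (0,1) (1,1) - ρ (1,0) (0,0) - ρ (1,0) (1,1) + ρ (1,1) (0,1) - ρ (1,1) (1,0)) / 4], ![(ρ (0,0) (0,1) - ρ (0,0) (1,0) + ρ (0,1) (0,0) + ρ (0,1) (1,1) + ρ (1,0) (0,0) + ρ (1,0) (1,1) - ρ (1,1) (0,1) + ρ (1,1) (1,0)) / 4, (ρ (0,0) (0,0) - ρ (0,0) (1,1) + ρ (0,1) (0,1) + ρ (0,1) (1,0) + ρ (1,0) (0,1) + ρ (1,0) (1,0) - ρ (1,1) (0,0) + ρ (1,1) (1,1)) / 4]]]]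

set_option maxHeartbeats 1000000 in
lemma stage1 (ρ : Matrix (Fin 2 × Fin 2) (Fin 2 × Fin 2) ℂ) :
    F W1e ρ = Matrix.of fun i j => sigv ρ i.1 i.2 j.1 j.2 := by
  unfold F trAncilla
  rw [← Matrix.ext_iff]
  simp only [Prod.forall, Fin.forall_fin_two, Matrix.of_apply]
  repeat' apply And.intro
  all_goals
    norm_num [Matrix.mul_apply, Matrix.conjTranspose_apply, Fintype.sum_prod_type,
      Fin.sum_univ_two, W1e, w1v, sigv, Matrix.kroneckerMap_apply, Matrix.single,
      Prod.ext_iff, Complex.star_def, map_div₀, _root_.map_one, map_ofNat, map_neg, _root_.map_zero]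
  all_goals ring

end Aux5
section Aux6

set_option maxHeartbeats 2000000 in
lemma stage2 (ρ : Matrix (Fin 2 × Fin 2) (Fin 2 × Fin 2) ℂ)
    (htr : ρ (0,0) (0,0) + ρ (0,1) (0,1) + ρ (1,0) (1,0) + ρ (1,1) (1,1) = 1) :
    F W2e (Matrix.of fun i j => sigv ρ i.1 i.2 j.1 j.2) = vecMulVec PsiM (star PsiM) := by
  have h2 : ((Real.sqrt 2 : ℝ) : ℂ) * ((Real.sqrt 2 : ℝ) : ℂ) = 2 := by
    norm_cast
    rw [Real.mul_self_sqrt] <;> norm_num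
  have h3 : (((Real.sqrt 2 : ℝ) : ℂ))⁻¹ * (((Real.sqrt 2 : ℝ) : ℂ))⁻¹ = 1/2 := by
    rw [← mul_inv, h2]; norm_num
  have h4 : (((Real.sqrt 2 : ℝ) : ℂ))⁻¹ ^ 2 = 1/2 := by rw [sq, h3]
  unfold F trAncilla
  rw [← Matrix.ext_iff]
  simp only [Prod.forall, Fin.forall_fin_two, Matrix.of_apply]
  repeat' apply And.intro
  all_goals
    norm_num [Matrix.mul_apply, Matrix.conjTranspose_apply, Fintype.sum_prod_type,
      Fin.sum_univ_two, W2e, w2v, sigv, Matrix.kroneckerMap_apply, Matrix.single,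
      Prod.ext_iff, Complex.star_def, map_div₀, _root_.map_one, map_ofNat, map_neg,
      _root_.map_zero, _root_.map_sub, Matrix.vecMulVec_apply, Pi.star_apply, PsiM,
      Complex.conj_ofReal, h3, h4,
      show (0 : Fin 2 × Fin 2) = ((0 : Fin 2), (0 : Fin 2)) from rfl,
      show (1 : Fin 2 × Fin 2) = ((1 : Fin 2), (1 : Fin 2)) from rfl]
  all_goals try simp only [← Prod.mk_zero_zero, ← Prod.mk_one_one] at htr ⊢
  all_goals
    first
      | ring1
      | linear_combination htr / 2
      | linear_combination (-htr) / 2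
      | linear_combination htr / 2 - h4
      | linear_combination (-htr) / 2 + h4
      | linear_combination htr
      | linear_combination (-htr)

end Aux6


/-- The simplified Bell-state pumping protocol of Barreiro et al. (Fig. 2): two
cycles, each consisting of a single MS gate followed by the controlled gate `C_in`
with the ancilla reset to `|1⟩` and then traced out, deterministically prepare the
singlet `|Ψ⁻⟩⟨Ψ⁻|` from an arbitrary two-qubit density matrix. -/
theorem simplified_Bell_state_pumping (ρ : Matrix (Fin 2 × Fin 2) (Fin 2 × Fin 2) ℂ)
    (hρ : ρ.PosSemidef) (hρtr : ρ.trace = 1) :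
    F V2 (F V1 ρ) = vecMulVec PsiM (star PsiM) := by
  have htr : ρ (0,0) (0,0) + ρ (0,1) (0,1) + ρ (1,0) (1,0) + ρ (1,1) (1,1) = 1 := by
    have h := hρtr
    rw [Matrix.trace] at h
    simpa [Fintype.sum_prod_type, Fin.sum_univ_two, Matrix.diag, add_assoc] using h
  rw [hFV1, stage1, hFV2, stage2 ρ htr]
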